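/- Let 0 < α < 1 and let G = (V, E) be an α-robust finite simple graph. Then ⌊α|V|⌋ − 2 cops are not sufficient to catch the robber in the entanglement game on G (the robber has a winning strategy against ⌊α|V|⌋ − 2 cops). -/

import Mathlib

/-- One legal move of the cops when the robber stands on `r`: either all cops stay put,
or one cop (possibly coming from off the graph, i.e. from `none`) flies to `r`. -/
def CopMove {V : Type*} {k : ℕ} (r : V) (f f' : Fin k → Option V) : Prop :=
  f' = f ∨ ∃ i : Fin k, f' = Function.update f i (some r)

/-- The cops can force a catch from the position where the cops are placed according to
`f` (a cop with value `none` is off the graph) and the robber stands on `r`.  After the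
cop move `f'`, the robber must move to an unoccupied neighbour; if he has no such
neighbour the cops have won (the inner quantification is vacuous). -/
inductive CopsWin {V : Type*} (G : SimpleGraph V) (k : ℕ) :
    (Fin k → Option V) → V → Prop where
  | step : ∀ (f : Fin k → Option V) (r : V) (f' : Fin k → Option V),
      CopMove r f f' →
      (∀ u : V, G.Adj r u → (∀ i, f' i ≠ some u) → CopsWin G k f' u) →
      CopsWin G k f r

/-- `k` cops suffice to catch the robber on `G`: wherever the robber chooses to start,
the cops (starting off the graph) can catch him. -/
def CopsCatch {V : Type*} (G : SimpleGraph V) (k : ℕ) : Prop :=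
  ∀ r : V, CopsWin G k (fun _ => none) r

/-- `G` is `α`-robust: every vertex subset `X` of size at least `(1-α)n` (where `n` is
the number of vertices of `G`) induces a subgraph containing a connected component with
more than `|X|/2` vertices (equivalently, a connected subset `Y ⊆ X` with `|Y| > |X|/2`). -/
def IsRobust {V : Type*} [Fintype V] (α : ℝ) (G : SimpleGraph V) : Prop :=
  ∀ X : Finset V, (1 - α) * (Fintype.card V : ℝ) ≤ (X.card : ℝ) →
    ∃ Y : Finset V, Y ⊆ X ∧ (X.card : ℝ) / 2 < (Y.card : ℝ) ∧
      (G.induce (Y : Set V)).Connected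

section Aux
set_option linter.unusedSectionVars false

open scoped Classical

variable {V : Type*}

/-- Reachability inside a vertex set `X`. -/
def ReachIn (G : SimpleGraph V) (X : Set V) : V → V → Prop :=
  Relation.ReflTransGen (fun a b => G.Adj a b ∧ a ∈ X ∧ b ∈ X)

lemma ReachIn.mono {G : SimpleGraph V} {X Y : Set V} (h : X ⊆ Y) {a b : V}
    (hr : ReachIn G X a b) : ReachIn G Y a b :=
  Relation.ReflTransGen.mono (p := fun a b => G.Adj a b ∧ a ∈ Y ∧ b ∈ Y)
    (fun _ _ hab => ⟨hab.1, h hab.2.1, h hab.2.2⟩) _ _ hr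

lemma ReachIn.trans' {G : SimpleGraph V} {X : Set V} {a b c : V}
    (h1 : ReachIn G X a b) (h2 : ReachIn G X b c) : ReachIn G X a c :=
  Relation.ReflTransGen.trans h1 h2

lemma reachIn_of_walk {G : SimpleGraph V} {Y : Set V} :
    ∀ {a b : Y}, (G.induce Y).Walk a b → ReachIn G Y (a : V) (b : V) := by
  intro a b w
  induction w with
  | nil => exact Relation.ReflTransGen.refl
  | @cons x y z h p ih =>
      exact Relation.ReflTransGen.head ⟨h, x.2, y.2⟩ ih

lemma reachIn_of_connected {G : SimpleGraph V} {Y : Set V}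
    (h : (G.induce Y).Connected) {a b : V} (ha : a ∈ Y) (hb : b ∈ Y) :
    ReachIn G Y a b := by
  obtain ⟨w⟩ := h.preconnected ⟨a, ha⟩ ⟨b, hb⟩
  exact reachIn_of_walk w

/-- If `y` is reachable from `r` inside `X` and `y ≠ r`, then `r` has a neighbour `w`
from which `y` is reachable inside `X \ {r}`. -/
lemma reachIn_exit {G : SimpleGraph V} {X : Set V} {r y : V}
    (h : ReachIn G X r y) (hy : y ≠ r) :
    ∃ w, G.Adj r w ∧ w ∈ X ∧ w ≠ r ∧ ReachIn G (X \ {r}) w y := by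
  induction h with
  | refl => exact absurd rfl hy
  | @tail b c hrb hbc ih =>
      by_cases hbr : b = r
      · subst hbr
        exact ⟨c, hbc.1, hbc.2.2, hy, Relation.ReflTransGen.refl⟩
      · obtain ⟨w, h1, h2, h3, h4⟩ := ih hbr
        exact ⟨w, h1, h2, h3,
          h4.tail ⟨hbc.1, ⟨hbc.2.1, hbr⟩, ⟨hbc.2.2, hy⟩⟩⟩

variable [Fintype V]

/-- The set of cop-free vertices. -/
noncomputable def freeSet {k : ℕ} (f : Fin k → Option V) : Finset V :=
  Finset.univ.filter (fun v => ∀ i, f i ≠ some v)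

lemma mem_freeSet {k : ℕ} {f : Fin k → Option V} {v : V} :
    v ∈ freeSet f ↔ ∀ i, f i ≠ some v := by
  simp [freeSet]

/-- The connected component of `r` inside `X`, as a finset. -/
noncomputable def compo (G : SimpleGraph V) (X : Finset V) (r : V) : Finset V :=
  X.filter (fun u => ReachIn G (↑X) r u)

lemma mem_compo {G : SimpleGraph V} {X : Finset V} {r u : V} :
    u ∈ compo G X r ↔ u ∈ X ∧ ReachIn G (↑X) r u := by
  simp [compo]

/-- The robber's invariant: he stands on a cop-free vertex whose component in the
cop-free graph is a strict majority. -/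
def RInv (G : SimpleGraph V) {k : ℕ} (f : Fin k → Option V) (r : V) : Prop :=
  r ∈ freeSet f ∧ (freeSet f).card < 2 * (compo G (freeSet f) r).card

lemma freeSet_card_lower {k : ℕ} (f : Fin k → Option V) :
    (Fintype.card V : ℝ) - k ≤ ((freeSet f).card : ℝ) := by
  have hsub : Finset.univ \ freeSet f ⊆
      Finset.univ.biUnion (fun i : Fin k => (f i).toFinset) := by
    intro v hv
    have hv' : ∃ i, f i = some v := by
      by_contra hno
      push_neg at hno
      exact (Finset.mem_sdiff.1 hv).2 (by simp [freeSet, hno])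
    obtain ⟨i, hi⟩ := hv' 
    simp only [Finset.mem_biUnion, Finset.mem_univ, true_and, Option.mem_toFinset]
    exact ⟨i, by rw [Option.mem_def, hi]⟩
  have h1 : (Finset.univ \ freeSet f).card ≤ k := by
    refine (Finset.card_le_card hsub).trans ?_
    refine (Finset.card_biUnion_le).trans ?_
    have : ∀ i : Fin k, (f i).toFinset.card ≤ 1 := by
      intro i; cases f i <;> simp
    calc (Finset.univ : Finset (Fin k)).sum (fun i => (f i).toFinset.card)
        ≤ (Finset.univ : Finset (Fin k)).sum (fun _ => 1) := Finset.sum_le_sum (fun i _ => this i)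
      _ = k := by simp
  have h2 : (Finset.univ \ freeSet f).card = Fintype.card V - (freeSet f).card := by
    rw [Finset.card_sdiff_of_subset (Finset.subset_univ _), Finset.card_univ]
  have h3 : (freeSet f).card ≤ Fintype.card V := by
    simpa using Finset.card_le_card (Finset.subset_univ (freeSet f))
  have : Fintype.card V ≤ (freeSet f).card + k := by omega
  have := (Nat.cast_le (α := ℝ)).2 this
  push_cast at this
  linarith

lemma inter_nonempty_of_card {s t u : Finset V} (hs : s ⊆ u) (ht : t ⊆ u)
    (h : u.card < s.card + t.card) : (s ∩ t).Nonempty := by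
  rw [← Finset.card_pos]
  have h1 : (s ∪ t).card ≤ u.card := Finset.card_le_card (Finset.union_subset hs ht)
  have := Finset.card_union_add_card_inter s t
  omega

end Aux

section Main
set_option linter.unusedSectionVars false
set_option maxHeartbeats 1000000
open scoped Classical

variable {V : Type*} [Fintype V]

lemma preserve {α : ℝ} (hα1 : α < 1) {G : SimpleGraph V} (hG : IsRobust α G) {k : ℕ}
    (hfree : ∀ g : Fin k → Option V,
      (1 - α) * (Fintype.card V : ℝ) + 2 ≤ ((freeSet g).card : ℝ))
    {f f' : Fin k → Option V} {r : V} (hmove : CopMove r f f') (hinv : RInv G f r) :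
    ∃ u, G.Adj r u ∧ u ∈ freeSet f' ∧ RInv G f' u := by
  have hα0' : (0:ℝ) ≤ (1 - α) * (Fintype.card V : ℝ) := by
    have : (0:ℝ) ≤ ((Fintype.card V : ℕ) : ℝ) := Nat.cast_nonneg _
    nlinarith
  obtain ⟨hr, hC⟩ := hinv
  have hCsubX : compo G (freeSet f) r ⊆ freeSet f := Finset.filter_subset _ _
  have hrC : r ∈ compo G (freeSet f) r := mem_compo.2 ⟨hr, Relation.ReflTransGen.refl⟩
  rcases hmove with heq | ⟨i, heq⟩
  · -- cops stay put
    subst heq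
    have hX2 : 2 ≤ (freeSet f').card := by
      have h := hfree f'
      have : (2:ℝ) ≤ ((freeSet f').card : ℝ) := by linarith
      exact_mod_cast this
    have hC2 : 1 < (compo G (freeSet f') r).card := by omega
    obtain ⟨u, huC, hur⟩ := Finset.exists_mem_ne hC2 r
    obtain ⟨hu1, hu2⟩ := mem_compo.1 huC
    obtain ⟨w, hadj, hwX, hwr, -⟩ := reachIn_exit hu2 hur
    have hwX' : w ∈ freeSet f' := hwX
    refine ⟨w, hadj, hwX', hwX', ?_⟩
    have hCsub : compo G (freeSet f') r ⊆ compo G (freeSet f') w := by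
      intro c hc
      obtain ⟨hc1, hc2⟩ := mem_compo.1 hc
      refine mem_compo.2 ⟨hc1, ReachIn.trans' ?_ hc2⟩
      exact Relation.ReflTransGen.single ⟨hadj.symm, hwX, hr⟩
    have := Finset.card_le_card hCsub
    omega
  · -- a cop flies to r
    subst heq
    have hsub : (freeSet f).erase r ⊆ freeSet (Function.update f i (some r)) := by
      intro v hv
      obtain ⟨hvr, hvX⟩ := Finset.mem_erase.1 hv
      refine mem_freeSet.2 (fun j => ?_)
      by_cases hj : j = i
      · subst hj; simp only [Function.update_self]
        exact fun h => hvr (Option.some.inj h).symm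
      · rw [Function.update_of_ne hj]
        exact mem_freeSet.1 hvX j
    have hXcard1 : 1 ≤ (freeSet f).card := Finset.card_pos.2 ⟨r, hr⟩
    have herasecard : ((freeSet f).erase r).card = (freeSet f).card - 1 :=
      Finset.card_erase_of_mem hr
    have hcard' : (freeSet (Function.update f i (some r))).card ≤ (freeSet f).card := by
      cases h0 : f i with
      | none =>
          have hss : freeSet (Function.update f i (some r)) ⊆ (freeSet f).erase r := by
            intro v hv
            have hv' := mem_freeSet.1 hv
            have hvr : v ≠ r := by
              intro h; subst h; exact (hv' i) (by simp)
            refine Finset.mem_erase.2 ⟨hvr, mem_freeSet.2 (fun j => ?_)⟩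
            by_cases hj : j = i
            · subst hj; rw [h0]; simp
            · have := hv' j; rwa [Function.update_of_ne hj] at this
          have := Finset.card_le_card hss
          omega
      | some v₀ =>
          have hss : freeSet (Function.update f i (some r)) ⊆ insert v₀ ((freeSet f).erase r) := by
            intro v hv
            have hv' := mem_freeSet.1 hv
            have hvr : v ≠ r := by
              intro h; subst h; exact (hv' i) (by simp)
            by_cases hv0 : v = v₀
            · subst hv0; exact Finset.mem_insert_self _ _
            refine Finset.mem_insert_of_mem (Finset.mem_erase.2 ⟨hvr, mem_freeSet.2 (fun j => ?_)⟩)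
            by_cases hj : j = i
            · subst hj; rw [h0]
              exact fun h => hv0 (Option.some.inj h).symm
            · have := hv' j; rwa [Function.update_of_ne hj] at this
          have h1 := Finset.card_le_card hss
          have h2 := Finset.card_insert_le v₀ ((freeSet f).erase r)
          omega
    have hX'sub : (↑(freeSet f) \ {r} : Set V) ⊆ (↑(freeSet (Function.update f i (some r))) : Set V) := by
      intro x hx
      obtain ⟨hx1, hx2⟩ := hx
      exact hsub (Finset.mem_erase.2 ⟨hx2, hx1⟩)
    rcases Nat.even_or_odd (freeSet f).card with he | ho
    · -- even case: apply robustness to the new free set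
      obtain ⟨t, ht⟩ := he
      obtain ⟨M, hMsub, hMcard, hMconn⟩ := hG (freeSet (Function.update f i (some r)))
        (by have := hfree (Function.update f i (some r)); linarith)
      have hM : (freeSet (Function.update f i (some r))).card < 2 * M.card := by
        have : ((freeSet (Function.update f i (some r))).card : ℝ) < 2 * (M.card : ℝ) := by
          linarith
        exact_mod_cast this
      have hCer : ((compo G (freeSet f) r).erase r).card = (compo G (freeSet f) r).card - 1 :=
        Finset.card_erase_of_mem hrC
      have hCsub' : (compo G (freeSet f) r).erase r ⊆ freeSet (Function.update f i (some r)) := by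
        intro c hc
        obtain ⟨hc1, hc2⟩ := Finset.mem_erase.1 hc
        exact hsub (Finset.mem_erase.2 ⟨hc1, hCsubX hc2⟩)
      have hCpos : 1 ≤ (compo G (freeSet f) r).card := Finset.card_pos.2 ⟨r, hrC⟩
      have hinter : (M ∩ (compo G (freeSet f) r).erase r).Nonempty := by
        refine inter_nonempty_of_card hMsub hCsub' ?_
        omega
      obtain ⟨y0, hy0⟩ := hinter
      have hy0M : y0 ∈ M := (Finset.mem_inter.1 hy0).1
      obtain ⟨hy0r, hy0C⟩ := Finset.mem_erase.1 (Finset.mem_inter.1 hy0).2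
      obtain ⟨w, hadj, hwX, hwr, hreach⟩ := reachIn_exit (mem_compo.1 hy0C).2 hy0r
      have hwX' : w ∈ freeSet (Function.update f i (some r)) :=
        hsub (Finset.mem_erase.2 ⟨hwr, hwX⟩)
      refine ⟨w, hadj, hwX', hwX', ?_⟩
      have hMsubc : M ⊆ compo G (freeSet (Function.update f i (some r))) w := by
        intro y hy
        refine mem_compo.2 ⟨hMsub hy, ReachIn.trans' (ReachIn.mono hX'sub hreach) ?_⟩
        exact ReachIn.mono (by exact_mod_cast Finset.coe_subset.2 hMsub)
          (reachIn_of_connected hMconn (Finset.mem_coe.2 hy0M) (Finset.mem_coe.2 hy))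
      have := Finset.card_le_card hMsubc
      omega
    · -- odd case: apply robustness to the old free set minus r
      obtain ⟨t, ht⟩ := ho
      have hWcardR : (((freeSet f).erase r).card : ℝ) = ((freeSet f).card : ℝ) - 1 := by
        rw [herasecard]
        push_cast [hXcard1]
        ring
      obtain ⟨Y, hYsub, hYcard, hYconn⟩ := hG ((freeSet f).erase r) (by
        have := hfree f
        rw [hWcardR]
        linarith)
      have hY : ((freeSet f).erase r).card < 2 * Y.card := by
        have : (((freeSet f).erase r).card : ℝ) < 2 * (Y.card : ℝ) := by linarith
        exact_mod_cast this
      have hYX : Y ⊆ freeSet f := hYsub.trans (Finset.erase_subset _ _)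
      have hinter : (Y ∩ compo G (freeSet f) r).Nonempty := by
        refine inter_nonempty_of_card hYX hCsubX ?_
        omega
      obtain ⟨y0, hy0⟩ := hinter
      have hy0Y : y0 ∈ Y := (Finset.mem_inter.1 hy0).1
      have hy0C : y0 ∈ compo G (freeSet f) r := (Finset.mem_inter.1 hy0).2
      have hy0r : y0 ≠ r := (Finset.mem_erase.1 (hYsub hy0Y)).1
      obtain ⟨w, hadj, hwX, hwr, hreach⟩ := reachIn_exit (mem_compo.1 hy0C).2 hy0r
      have hwX' : w ∈ freeSet (Function.update f i (some r)) :=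
        hsub (Finset.mem_erase.2 ⟨hwr, hwX⟩)
      refine ⟨w, hadj, hwX', hwX', ?_⟩
      have hYsubX' : Y ⊆ freeSet (Function.update f i (some r)) := hYsub.trans hsub
      have hYsubc : Y ⊆ compo G (freeSet (Function.update f i (some r))) w := by
        intro y hy
        refine mem_compo.2 ⟨hYsubX' hy, ReachIn.trans' (ReachIn.mono hX'sub hreach) ?_⟩
        exact ReachIn.mono (by exact_mod_cast Finset.coe_subset.2 hYsubX')
          (reachIn_of_connected hYconn (Finset.mem_coe.2 hy0Y) (Finset.mem_coe.2 hy))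
      have := Finset.card_le_card hYsubc
      omega

end Main

section Final
set_option linter.unusedSectionVars false
open scoped Classical

variable {V : Type*} [Fintype V]

lemma copswin_not_rinv {α : ℝ} (hα1 : α < 1) {G : SimpleGraph V} (hG : IsRobust α G) {k : ℕ}
    (hfree : ∀ g : Fin k → Option V,
      (1 - α) * (Fintype.card V : ℝ) + 2 ≤ ((freeSet g).card : ℝ))
    {f : Fin k → Option V} {r : V} (hwin : CopsWin G k f r) : ¬ RInv G f r := by
  induction hwin with
  | step f r f' hmove hnext ih =>
      intro hinv
      obtain ⟨u, hadj, hu, hinv'⟩ := preserve hα1 hG hfree hmove hinv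
      exact ih u hadj (mem_freeSet.1 hu) hinv'

end Final

/-- If `0 < α < 1` and `G` is an `α`-robust finite simple graph, then
`⌊α|V|⌋ - 2` cops are not sufficient to catch the robber in the entanglement game on
`G`; that is, any number `k` of cops with `k ≤ ⌊α|V|⌋ - 2` fails to catch the robber. -/
theorem statement_7 {V : Type*} [Fintype V] (α : ℝ) (hα0 : 0 < α) (hα1 : α < 1)
    (G : SimpleGraph V) (hG : IsRobust α G) :
    ∀ k : ℕ, (k : ℤ) ≤ ⌊α * (Fintype.card V : ℝ)⌋ - 2 → ¬ CopsCatch G k := by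
  classical
  intro k hk hcatch
  set n := Fintype.card V with hn
  have h1 : ((k : ℝ)) + 2 ≤ α * (n : ℝ) := by
    have h2 : (k : ℤ) + 2 ≤ ⌊α * (n : ℝ)⌋ := by omega
    have h3 : ((⌊α * (n : ℝ)⌋ : ℤ) : ℝ) ≤ α * (n : ℝ) := Int.floor_le _
    have h4 : ((k : ℤ) : ℝ) + 2 ≤ ((⌊α * (n : ℝ)⌋ : ℤ) : ℝ) := by exact_mod_cast h2
    push_cast at h4 ⊢
    linarith
  have hfree : ∀ g : Fin k → Option V,
      (1 - α) * (n : ℝ) + 2 ≤ ((freeSet g).card : ℝ) := by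
    intro g
    have := freeSet_card_lower g
    rw [← hn] at this
    linarith
  -- establish the initial invariant
  have huniv : (1 - α) * (n : ℝ) ≤ ((Finset.univ : Finset V).card : ℝ) := by
    rw [Finset.card_univ, ← hn]
    nlinarith
  obtain ⟨Y, hYsub, hYcard, hYconn⟩ := hG Finset.univ huniv
  have hYpos : 0 < Y.card := by
    have h5 : (0:ℝ) ≤ ((Finset.univ : Finset V).card : ℝ) / 2 := by positivity
    have : (0:ℝ) < (Y.card : ℝ) := lt_of_le_of_lt h5 hYcard
    exact_mod_cast this
  obtain ⟨r, hrY⟩ := Finset.card_pos.1 hYpos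
  have hfsu : freeSet (fun _ : Fin k => (none : Option V)) = Finset.univ := by
    ext v; simp [mem_freeSet]
  have hinv : RInv G (fun _ : Fin k => (none : Option V)) r := by
    constructor
    · rw [hfsu]; exact Finset.mem_univ r
    · rw [hfsu]
      have hYsubc : Y ⊆ compo G Finset.univ r := by
        intro y hy
        refine mem_compo.2 ⟨Finset.mem_univ y, ?_⟩
        refine ReachIn.mono ?_ (reachIn_of_connected hYconn (Finset.mem_coe.2 hrY) (Finset.mem_coe.2 hy))
        intro x hx; exact Finset.mem_coe.2 (Finset.mem_univ x)
      have h6 := Finset.card_le_card hYsubc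
      have h7 : (Finset.univ : Finset V).card < 2 * Y.card := by
        have : ((Finset.univ : Finset V).card : ℝ) < 2 * (Y.card : ℝ) := by linarith
        exact_mod_cast this
      omega
  exact copswin_not_rinv hα1 hG hfree (hcatch r) hinv
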